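/- Fix a nonzero complex number ℏ and c ∈ ℂ with c ∉ {1, −1}, and set Δ(t) = e^t + e^{−t} − c(e^t − e^{−t}). On the open set {t ∈ ℂ : Δ(t) ≠ 0}, the function f(t,u,v) = (2/Δ(t))·exp( (2(e^t − e^{−t})uv)/(iℏ·Δ(t)) ) satisfies f(0,u,v) = 1 and solves ∂_t f = (c + 2uv/(iℏ))·f + (c+1)u·∂_u f + (c−1)v·∂_v f + (iℏ/2)(c² − 1)·∂_u∂_v f. Moreover Δ(t) = 0 if and only if e^{2t} = (c+1)/(c−1); hence the singular points of f form a πi-periodic set lying on the single vertical line Re t = ½·log|(c+1)/(c−1)|, and they are poles rather than branch points. -/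

import Mathlib

open Complex

set_option maxHeartbeats 2000000 in
/-- Fix `ℏ ≠ 0` and `c ∉ {1, −1}`, and set `Δ(t) = e^t + e^{−t} − c(e^t − e^{−t})`.
On `{Δ ≠ 0}` the function `f(t,u,v) = (2/Δ(t))·exp(2(e^t−e^{−t})uv/(iℏΔ(t)))` (the
`K`-ordered expression of `e_∗^{t(2/(iℏ))u∘v}` for `K = [[0,c],[c,0]]`) satisfies
`f(0,u,v) = 1` and the evolution equation; moreover `Δ(t) = 0 ↔ e^{2t} = (c+1)/(c−1)`,
so the singular set is `πi`-periodic and lies on the single vertical line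
`Re t = ½ log|(c+1)/(c−1)|`, and away from it `f` is single-valued holomorphic
(poles rather than branch points). -/
theorem statement3 (ℏ c : ℂ) (hℏ : ℏ ≠ 0) (hc1 : c ≠ 1) (hc2 : c ≠ -1)
    (Δ : ℂ → ℂ)
    (hΔ : ∀ t, Δ t = exp t + exp (-t) - c * (exp t - exp (-t)))
    (f : ℂ → ℂ → ℂ → ℂ)
    (hf : ∀ t u v, f t u v =
      2 / Δ t * exp (2 * (exp t - exp (-t)) * u * v / (Complex.I * ℏ * Δ t))) :
    (∀ u v : ℂ, f 0 u v = 1) ∧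
    (∀ t : ℂ, Δ t ≠ 0 → ∀ u v : ℂ,
      HasDerivAt (fun s => f s u v)
        ((c + 2 * u * v / (Complex.I * ℏ)) * f t u v
          + (c + 1) * u * deriv (fun x => f t x v) u
          + (c - 1) * v * deriv (fun y => f t u y) v
          + (Complex.I * ℏ / 2) * (c ^ 2 - 1) *
              deriv (fun x => deriv (fun y => f t x y) v) u) t) ∧
    (∀ t : ℂ, Δ t = 0 ↔ exp (2 * t) = (c + 1) / (c - 1)) ∧
    (∀ t : ℂ, Δ t = 0 → Δ (t + Real.pi * Complex.I) = 0) ∧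
    (∀ t : ℂ, Δ t = 0 → t.re = Real.log (‖(c + 1) / (c - 1)‖) / 2) ∧
    (∀ u v : ℂ, DifferentiableOn ℂ (fun t => f t u v) {t | Δ t ≠ 0}) := by
  have hw : Complex.I * ℏ ≠ 0 := mul_ne_zero Complex.I_ne_zero hℏ
  have hΔe : Δ = fun t => exp t + exp (-t) - c * (exp t - exp (-t)) := funext hΔ
  have hfe : f = fun t u v =>
      2 / Δ t * exp (2 * (exp t - exp (-t)) * u * v / (Complex.I * ℏ * Δ t)) := by
    funext t u v; exact hf t u v
  subst hfe
  subst hΔe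
  have key : ∀ t : ℂ, (exp t + exp (-t) - c * (exp t - exp (-t))) ≠ 0 → ∀ u v : ℂ,
      HasDerivAt (fun s => (fun t u v =>
        2 / (exp t + exp (-t) - c * (exp t - exp (-t))) *
          exp (2 * (exp t - exp (-t)) * u * v /
            (Complex.I * ℏ * (exp t + exp (-t) - c * (exp t - exp (-t)))))) s u v)
        ((c + 2 * u * v / (Complex.I * ℏ)) * (fun t u v =>
        2 / (exp t + exp (-t) - c * (exp t - exp (-t))) *
          exp (2 * (exp t - exp (-t)) * u * v /
            (Complex.I * ℏ * (exp t + exp (-t) - c * (exp t - exp (-t)))))) t u v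
          + (c + 1) * u * deriv (fun x => (fun t u v =>
        2 / (exp t + exp (-t) - c * (exp t - exp (-t))) *
          exp (2 * (exp t - exp (-t)) * u * v /
            (Complex.I * ℏ * (exp t + exp (-t) - c * (exp t - exp (-t)))))) t x v) u
          + (c - 1) * v * deriv (fun y => (fun t u v =>
        2 / (exp t + exp (-t) - c * (exp t - exp (-t))) *
          exp (2 * (exp t - exp (-t)) * u * v /
            (Complex.I * ℏ * (exp t + exp (-t) - c * (exp t - exp (-t)))))) t u y) v
          + (Complex.I * ℏ / 2) * (c ^ 2 - 1) *
              deriv (fun x => deriv (fun y => (fun t u v =>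
        2 / (exp t + exp (-t) - c * (exp t - exp (-t))) *
          exp (2 * (exp t - exp (-t)) * u * v /
            (Complex.I * ℏ * (exp t + exp (-t) - c * (exp t - exp (-t)))))) t x y) v) u) t := by
    intro t ht u v
    beta_reduce
    have hwd : Complex.I * ℏ * (exp t + exp (-t) - c * (exp t - exp (-t))) ≠ 0 := mul_ne_zero hw ht
    -- derivative in u
    have hargu : ∀ x y : ℂ, HasDerivAt (fun z : ℂ => 2 * (exp t - exp (-t)) * z * y / (Complex.I * ℏ * (exp t + exp (-t) - c * (exp t - exp (-t)))))
        (2 * (exp t - exp (-t)) * y / (Complex.I * ℏ * (exp t + exp (-t) - c * (exp t - exp (-t))))) x := by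
      intro x y
      have h1 := (((hasDerivAt_id x).const_mul (2 * (exp t - exp (-t)))).mul_const y).div_const (Complex.I * ℏ * (exp t + exp (-t) - c * (exp t - exp (-t))))
      refine h1.congr_deriv ?_
      ring
    have hfu : ∀ x y : ℂ, HasDerivAt (fun z : ℂ => 2 / (exp t + exp (-t) - c * (exp t - exp (-t))) * exp (2 * (exp t - exp (-t)) * z * y / (Complex.I * ℏ * (exp t + exp (-t) - c * (exp t - exp (-t))))))
        (2 * (exp t - exp (-t)) * y / (Complex.I * ℏ * (exp t + exp (-t) - c * (exp t - exp (-t)))) * (2 / (exp t + exp (-t) - c * (exp t - exp (-t))) * exp (2 * (exp t - exp (-t)) * x * y / (Complex.I * ℏ * (exp t + exp (-t) - c * (exp t - exp (-t))))))) x := by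
      intro x y
      have h2 := ((hargu x y).cexp).const_mul (2 / (exp t + exp (-t) - c * (exp t - exp (-t))))
      refine h2.congr_deriv ?_
      ring
    have hdu : deriv (fun x => 2 / (exp t + exp (-t) - c * (exp t - exp (-t))) * exp (2 * (exp t - exp (-t)) * x * v / (Complex.I * ℏ * (exp t + exp (-t) - c * (exp t - exp (-t)))))) u
        = 2 * (exp t - exp (-t)) * v / (Complex.I * ℏ * (exp t + exp (-t) - c * (exp t - exp (-t)))) * (2 / (exp t + exp (-t) - c * (exp t - exp (-t))) * exp (2 * (exp t - exp (-t)) * u * v / (Complex.I * ℏ * (exp t + exp (-t) - c * (exp t - exp (-t)))))) := (hfu u v).deriv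
    -- derivative in v
    have hargv : ∀ x y : ℂ, HasDerivAt (fun z : ℂ => 2 * (exp t - exp (-t)) * x * z / (Complex.I * ℏ * (exp t + exp (-t) - c * (exp t - exp (-t)))))
        (2 * (exp t - exp (-t)) * x / (Complex.I * ℏ * (exp t + exp (-t) - c * (exp t - exp (-t))))) y := by
      intro x y
      have h1 := ((hasDerivAt_id y).const_mul (2 * (exp t - exp (-t)) * x)).div_const (Complex.I * ℏ * (exp t + exp (-t) - c * (exp t - exp (-t))))
      refine h1.congr_deriv ?_
      ring
    have hfv : ∀ x y : ℂ, HasDerivAt (fun z : ℂ => 2 / (exp t + exp (-t) - c * (exp t - exp (-t))) * exp (2 * (exp t - exp (-t)) * x * z / (Complex.I * ℏ * (exp t + exp (-t) - c * (exp t - exp (-t))))))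
        (2 * (exp t - exp (-t)) * x / (Complex.I * ℏ * (exp t + exp (-t) - c * (exp t - exp (-t)))) * (2 / (exp t + exp (-t) - c * (exp t - exp (-t))) * exp (2 * (exp t - exp (-t)) * x * y / (Complex.I * ℏ * (exp t + exp (-t) - c * (exp t - exp (-t))))))) y := by
      intro x y
      have h2 := ((hargv x y).cexp).const_mul (2 / (exp t + exp (-t) - c * (exp t - exp (-t))))
      refine h2.congr_deriv ?_
      ring
    have hdv : deriv (fun y => 2 / (exp t + exp (-t) - c * (exp t - exp (-t))) * exp (2 * (exp t - exp (-t)) * u * y / (Complex.I * ℏ * (exp t + exp (-t) - c * (exp t - exp (-t)))))) v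
        = 2 * (exp t - exp (-t)) * u / (Complex.I * ℏ * (exp t + exp (-t) - c * (exp t - exp (-t)))) * (2 / (exp t + exp (-t) - c * (exp t - exp (-t))) * exp (2 * (exp t - exp (-t)) * u * v / (Complex.I * ℏ * (exp t + exp (-t) - c * (exp t - exp (-t)))))) := (hfv u v).deriv
    -- mixed derivative
    have hinner : (fun x => deriv (fun y => 2 / (exp t + exp (-t) - c * (exp t - exp (-t))) * exp (2 * (exp t - exp (-t)) * x * y / (Complex.I * ℏ * (exp t + exp (-t) - c * (exp t - exp (-t)))))) v)
        = fun x => 2 * (exp t - exp (-t)) * x / (Complex.I * ℏ * (exp t + exp (-t) - c * (exp t - exp (-t)))) * (2 / (exp t + exp (-t) - c * (exp t - exp (-t))) * exp (2 * (exp t - exp (-t)) * x * v / (Complex.I * ℏ * (exp t + exp (-t) - c * (exp t - exp (-t)))))) := by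
      funext x
      exact (hfv x v).deriv
    have hduv : deriv (fun x => deriv (fun y => 2 / (exp t + exp (-t) - c * (exp t - exp (-t))) * exp (2 * (exp t - exp (-t)) * x * y / (Complex.I * ℏ * (exp t + exp (-t) - c * (exp t - exp (-t)))))) v) u
        = 2 * (exp t - exp (-t)) / (Complex.I * ℏ * (exp t + exp (-t) - c * (exp t - exp (-t)))) * (2 / (exp t + exp (-t) - c * (exp t - exp (-t))) * exp (2 * (exp t - exp (-t)) * u * v / (Complex.I * ℏ * (exp t + exp (-t) - c * (exp t - exp (-t))))))
          + 2 * (exp t - exp (-t)) * u / (Complex.I * ℏ * (exp t + exp (-t) - c * (exp t - exp (-t)))) * (2 * (exp t - exp (-t)) * v / (Complex.I * ℏ * (exp t + exp (-t) - c * (exp t - exp (-t)))) * (2 / (exp t + exp (-t) - c * (exp t - exp (-t))) * exp (2 * (exp t - exp (-t)) * u * v / (Complex.I * ℏ * (exp t + exp (-t) - c * (exp t - exp (-t))))))) := by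
      rw [hinner]
      have h1 : HasDerivAt (fun x : ℂ => 2 * (exp t - exp (-t)) * x / (Complex.I * ℏ * (exp t + exp (-t) - c * (exp t - exp (-t))))) (2 * (exp t - exp (-t)) / (Complex.I * ℏ * (exp t + exp (-t) - c * (exp t - exp (-t))))) u := by
        have := ((hasDerivAt_id u).const_mul (2 * (exp t - exp (-t)))).div_const (Complex.I * ℏ * (exp t + exp (-t) - c * (exp t - exp (-t))))
        refine this.congr_deriv ?_
        ring
      exact (h1.mul (hfu u v)).deriv
    rw [hdu, hdv, hduv]
    -- derivative in t
    have hEb : HasDerivAt (fun s : ℂ => exp (-s)) (-exp (-t)) t := by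
      have := ((hasDerivAt_id t).neg).cexp
      simpa using this
    have hEa : HasDerivAt exp (exp t) t := Complex.hasDerivAt_exp t
    have hg : HasDerivAt (fun s : ℂ => exp s - exp (-s)) (exp t + exp (-t)) t := by
      have := hEa.sub hEb
      refine this.congr_deriv ?_
      ring
    have hDd : HasDerivAt (fun s : ℂ => exp s + exp (-s) - c * (exp s - exp (-s))) ((exp t - exp (-t)) - c * (exp t + exp (-t))) t := by
      exact (hEa.add hEb).sub (hg.const_mul c)
    have hNum : HasDerivAt (fun s : ℂ => 2 * (exp s - exp (-s)) * u * v) (2 * (exp t + exp (-t)) * u * v) t := by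
      exact ((hg.const_mul 2).mul_const u).mul_const v
    have hDen : HasDerivAt (fun s : ℂ => Complex.I * ℏ * (exp s + exp (-s) - c * (exp s - exp (-s))))
        (Complex.I * ℏ * ((exp t - exp (-t)) - c * (exp t + exp (-t)))) t := hDd.const_mul _
    have hArg := hNum.div hDen hwd
    have hC := (hasDerivAt_const t (2:ℂ)).div hDd ht
    have hT := hC.mul hArg.cexp
    refine hT.congr_deriv ?_
    beta_reduce
    simp only [Pi.div_apply, Pi.mul_apply]
    have ha : exp t ≠ 0 := Complex.exp_ne_zero t
    have hab : exp t * exp (-t) = 1 := by rw [← Complex.exp_add]; simp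
    clear hwd hinner hdu hdv hduv
    generalize hd : exp t + exp (-t) - c * (exp t - exp (-t)) = d at ht ⊢
    generalize hA : exp t = A at ha hab hd ⊢
    generalize hB : exp (-t) = B at hab hd ⊢
    generalize hE : exp (2 * (A - B) * u * v / (Complex.I * ℏ * d)) = E
    have hI : Complex.I ≠ 0 := Complex.I_ne_zero
    field_simp
    linear_combination (E * (2 * Complex.I * ℏ * c * d + 4 * u * v * (d + c * (A - B)))) * hd
  have part3 : ∀ t : ℂ, (exp t + exp (-t) - c * (exp t - exp (-t))) = 0 ↔
      exp (2 * t) = (c + 1) / (c - 1) := by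
    intro t
    have ha : exp t ≠ 0 := Complex.exp_ne_zero t
    have hc1' : c - 1 ≠ 0 := sub_ne_zero.mpr hc1
    rw [Complex.exp_neg, two_mul, Complex.exp_add, eq_div_iff hc1']
    have hinv : exp t * (exp t)⁻¹ = 1 := mul_inv_cancel₀ ha
    constructor
    · intro h
      linear_combination (-exp t) * h + (1 + c) * hinv
    · intro h
      linear_combination (-(exp t)⁻¹) * h + (c - 1) * exp t * hinv
  refine ⟨?_, ?_, part3, ?_, ?_, ?_⟩
  · intro u v
    simp
    norm_num
  · exact key
  · intro t h0
    have h1 : exp (t + Real.pi * Complex.I) = -exp t := by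
      rw [Complex.exp_add, Complex.exp_pi_mul_I]; ring
    have h2 : exp (-(t + Real.pi * Complex.I)) = -exp (-t) := by
      rw [neg_add, Complex.exp_add, Complex.exp_neg (Real.pi * Complex.I),
        Complex.exp_pi_mul_I]
      norm_num
    beta_reduce
    beta_reduce at h0
    rw [h1, h2]
    linear_combination -h0
  · intro t h0
    have h2 : exp (2 * t) = (c + 1) / (c - 1) := (part3 t).1 h0
    have h3 := congrArg norm h2
    rw [Complex.norm_exp] at h3
    have h4 := congrArg Real.log h3
    rw [Real.log_exp] at h4
    have h5 : (2 * t).re = 2 * t.re := by simp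
    rw [h5] at h4
    linarith
  · intro u v t ht
    exact ((key t ht u v).differentiableAt).differentiableWithinAt
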